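/- Let Λ ∈ ℝ^{m×n} be a positive matrix, (r,c) positive margin vectors with Σ r_i = Σ c_j = N, and let κ̄(i,j) = log( (r_i/N)(c_j/N) / (Λ_{ij}/‖Λ‖₁) ). Suppose (α,β) are Schrödinger potentials with Σ_j e^{α_i+β_j} Λ_{ij} = r_i and Σ_i e^{α_i+β_j} Λ_{ij} = c_j for all i,j, obtained from the normalized potentials with gauge Σ_j β̄_j c_j/N = 0 by adding log(N/‖Λ‖₁). Then for all i, j: e^{−4‖κ̄‖_∞} N/‖Λ‖₁ ≤ e^{α_i + β_j} ≤ e^{2‖κ̄‖_∞} N/‖Λ‖₁. -/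

import Mathlib

open Real

set_option maxHeartbeats 2000000 in
/-- Two-sided uniform bound on the Schrödinger (matrix scaling) potentials for a positive
matrix `Λ` with positive margins `(r, c)` of total mass `N`:
`e^{−4‖κ̄‖_∞} N/‖Λ‖₁ ≤ e^{α_i+β_j} ≤ e^{2‖κ̄‖_∞} N/‖Λ‖₁`, where
`κ̄(i,j) = log((r_i/N)(c_j/N)/(Λ_{ij}/‖Λ‖₁))`. -/
theorem matrix_scaling_potential_bounds {m n : ℕ} (hm : 0 < m) (hn : 0 < n)
    (Λ : Matrix (Fin m) (Fin n) ℝ) (hΛ : ∀ i j, 0 < Λ i j)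
    (r : Fin m → ℝ) (c : Fin n → ℝ) (hr : ∀ i, 0 < r i) (hc : ∀ j, 0 < c j)
    (N : ℝ) (hN : 0 < N) (hrN : ∑ i, r i = N) (hcN : ∑ j, c j = N)
    (S : ℝ) (hS : S = ∑ i, ∑ j, Λ i j)
    (K : ℝ) (hK : ∀ i j, |Real.log ((r i / N) * (c j / N) / (Λ i j / S))| ≤ K)
    (α : Fin m → ℝ) (β : Fin n → ℝ)
    (hrowEq : ∀ i, ∑ j, Real.exp (α i + β j) * Λ i j = r i)
    (hcolEq : ∀ j, ∑ i, Real.exp (α i + β j) * Λ i j = c j) :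
    ∀ i j, Real.exp (-(4 * K)) * N / S ≤ Real.exp (α i + β j) ∧
      Real.exp (α i + β j) ≤ Real.exp (2 * K) * N / S := by
  haveI : Nonempty (Fin m) := ⟨⟨0, hm⟩⟩
  haveI : Nonempty (Fin n) := ⟨⟨0, hn⟩⟩
  have hS0 : 0 < S := by
    rw [hS]
    exact Finset.sum_pos (fun i _ => Finset.sum_pos (fun j _ => hΛ i j) Finset.univ_nonempty)
      Finset.univ_nonempty
  have hK0 : 0 ≤ K := le_trans (abs_nonneg _) (hK ⟨0, hm⟩ ⟨0, hn⟩)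
  have hKK : Real.exp (-K) * Real.exp K = 1 := by rw [← Real.exp_add]; simp
  -- pointwise bounds on Λ
  have hΛbd : ∀ i j, Real.exp (-K) * (r i * c j * S) ≤ N ^ 2 * Λ i j ∧
      N ^ 2 * Λ i j ≤ Real.exp K * (r i * c j * S) := by
    intro i j
    have hx0 : 0 < (r i / N) * (c j / N) / (Λ i j / S) := by
      have := hr i; have := hc j; have := hΛ i j; positivity
    obtain ⟨h1, h2⟩ := abs_le.mp (hK i j)
    have hlow : Real.exp (-K) ≤ (r i / N) * (c j / N) / (Λ i j / S) := by
      calc Real.exp (-K) ≤ Real.exp (Real.log ((r i / N) * (c j / N) / (Λ i j / S))) :=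
            Real.exp_le_exp.mpr h1
        _ = _ := Real.exp_log hx0
    have hhigh : (r i / N) * (c j / N) / (Λ i j / S) ≤ Real.exp K := by
      calc (r i / N) * (c j / N) / (Λ i j / S)
          = Real.exp (Real.log ((r i / N) * (c j / N) / (Λ i j / S))) := (Real.exp_log hx0).symm
        _ ≤ Real.exp K := Real.exp_le_exp.mpr h2
    have hxeq : (r i / N) * (c j / N) / (Λ i j / S) = r i * c j * S / (N ^ 2 * Λ i j) := by
      field_simp
    rw [hxeq] at hlow hhigh
    have hden : 0 < N ^ 2 * Λ i j := by have := hΛ i j; positivity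
    constructor
    · -- from hhigh : r c S / (N²Λ) ≤ e^K, so r c S ≤ e^K N²Λ, so e^{-K} r c S ≤ N²Λ
      have h3 : r i * c j * S ≤ Real.exp K * (N ^ 2 * Λ i j) := (div_le_iff₀ hden).mp hhigh
      have h4 := mul_le_mul_of_nonneg_left h3 (Real.exp_pos (-K)).le
      calc Real.exp (-K) * (r i * c j * S) ≤ Real.exp (-K) * (Real.exp K * (N ^ 2 * Λ i j)) := h4
        _ = (Real.exp (-K) * Real.exp K) * (N ^ 2 * Λ i j) := by ring
        _ = N ^ 2 * Λ i j := by rw [hKK, one_mul]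
    · -- from hlow : e^{-K} ≤ r c S/(N²Λ), so e^{-K} N²Λ ≤ r c S, so N²Λ ≤ e^K r c S
      have h3 : Real.exp (-K) * (N ^ 2 * Λ i j) ≤ r i * c j * S := (le_div_iff₀ hden).mp hlow
      have h4 := mul_le_mul_of_nonneg_left h3 (Real.exp_pos K).le
      calc N ^ 2 * Λ i j = (Real.exp K * Real.exp (-K)) * (N ^ 2 * Λ i j) := by
            rw [mul_comm (Real.exp K), hKK, one_mul]
        _ = Real.exp K * (Real.exp (-K) * (N ^ 2 * Λ i j)) := by ring
        _ ≤ Real.exp K * (r i * c j * S) := h4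
  have hlb := fun i j => (hΛbd i j).1
  have hub := fun i j => (hΛbd i j).2
  -- flip helpers
  have flipA : ∀ x y : ℝ, Real.exp (-K) * x ≤ y → x ≤ Real.exp K * y := by
    intro x y h
    have h2 := mul_le_mul_of_nonneg_left h (Real.exp_pos K).le
    calc x = Real.exp K * (Real.exp (-K) * x) := by
          rw [← mul_assoc, mul_comm (Real.exp K), hKK, one_mul]
      _ ≤ Real.exp K * y := h2
  have flipB : ∀ x y : ℝ, x ≤ Real.exp K * y → Real.exp (-K) * x ≤ y := by
    intro x y h
    have h2 := mul_le_mul_of_nonneg_left h (Real.exp_pos (-K)).le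
    calc Real.exp (-K) * x ≤ Real.exp (-K) * (Real.exp K * y) := h2
      _ = y := by rw [← mul_assoc, hKK, one_mul]
  -- A and B
  have hA0 : 0 < ∑ i, Real.exp (α i) * r i :=
    Finset.sum_pos (fun i _ => mul_pos (Real.exp_pos _) (hr i)) Finset.univ_nonempty
  have hB0 : 0 < ∑ j, Real.exp (β j) * c j :=
    Finset.sum_pos (fun j _ => mul_pos (Real.exp_pos _) (hc j)) Finset.univ_nonempty
  -- row bounds : e^{-K} N² ≤ S * (e^{α i} * B) ≤ e^K N²
  have hrowB : ∀ i, Real.exp (-K) * N ^ 2 ≤ S * (Real.exp (α i) * ∑ j, Real.exp (β j) * c j) ∧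
      S * (Real.exp (α i) * ∑ j, Real.exp (β j) * c j) ≤ Real.exp K * N ^ 2 := by
    intro i
    have eqL : ∑ j, Real.exp (α i + β j) * (Real.exp (-K) * (r i * c j * S)) =
        r i * (Real.exp (-K) * (S * (Real.exp (α i) * ∑ j, Real.exp (β j) * c j))) := by
      calc ∑ j, Real.exp (α i + β j) * (Real.exp (-K) * (r i * c j * S))
          = ∑ j, (Real.exp (-K) * (r i * S * Real.exp (α i))) * (Real.exp (β j) * c j) :=
            Finset.sum_congr rfl fun j _ => by rw [Real.exp_add]; ring
        _ = (Real.exp (-K) * (r i * S * Real.exp (α i))) * ∑ j, Real.exp (β j) * c j := by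
            rw [← Finset.mul_sum]
        _ = _ := by ring
    have eqU : ∑ j, Real.exp (α i + β j) * (Real.exp K * (r i * c j * S)) =
        r i * (Real.exp K * (S * (Real.exp (α i) * ∑ j, Real.exp (β j) * c j))) := by
      calc ∑ j, Real.exp (α i + β j) * (Real.exp K * (r i * c j * S))
          = ∑ j, (Real.exp K * (r i * S * Real.exp (α i))) * (Real.exp (β j) * c j) :=
            Finset.sum_congr rfl fun j _ => by rw [Real.exp_add]; ring
        _ = (Real.exp K * (r i * S * Real.exp (α i))) * ∑ j, Real.exp (β j) * c j := by
            rw [← Finset.mul_sum]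
        _ = _ := by ring
    have eqM : ∑ j, Real.exp (α i + β j) * (N ^ 2 * Λ i j) = r i * N ^ 2 := by
      calc ∑ j, Real.exp (α i + β j) * (N ^ 2 * Λ i j)
          = N ^ 2 * ∑ j, Real.exp (α i + β j) * Λ i j := by
            rw [Finset.mul_sum]; exact Finset.sum_congr rfl fun j _ => by ring
        _ = r i * N ^ 2 := by rw [hrowEq i, mul_comm]
    constructor
    · -- from hub : N²Λ ≤ e^K r c S
      have h := Finset.sum_le_sum
        (fun j (_ : j ∈ Finset.univ) => mul_le_mul_of_nonneg_left (hub i j)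
          (Real.exp_pos (α i + β j)).le)
      rw [eqM, eqU] at h
      exact flipB _ _ (le_of_mul_le_mul_left h (hr i))
    · -- from hlb : e^{-K} r c S ≤ N²Λ
      have h := Finset.sum_le_sum
        (fun j (_ : j ∈ Finset.univ) => mul_le_mul_of_nonneg_left (hlb i j)
          (Real.exp_pos (α i + β j)).le)
      rw [eqM, eqL] at h
      exact flipA _ _ (le_of_mul_le_mul_left h (hr i))
  -- column bounds : e^{-K} N² ≤ S * (e^{β j} * A) ≤ e^K N²
  have hcolB : ∀ j, Real.exp (-K) * N ^ 2 ≤ S * (Real.exp (β j) * ∑ i, Real.exp (α i) * r i) ∧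
      S * (Real.exp (β j) * ∑ i, Real.exp (α i) * r i) ≤ Real.exp K * N ^ 2 := by
    intro j
    have eqL : ∑ i, Real.exp (α i + β j) * (Real.exp (-K) * (r i * c j * S)) =
        c j * (Real.exp (-K) * (S * (Real.exp (β j) * ∑ i, Real.exp (α i) * r i))) := by
      calc ∑ i, Real.exp (α i + β j) * (Real.exp (-K) * (r i * c j * S))
          = ∑ i, (Real.exp (-K) * (c j * S * Real.exp (β j))) * (Real.exp (α i) * r i) :=
            Finset.sum_congr rfl fun i _ => by rw [Real.exp_add]; ring
        _ = (Real.exp (-K) * (c j * S * Real.exp (β j))) * ∑ i, Real.exp (α i) * r i := by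
            rw [← Finset.mul_sum]
        _ = _ := by ring
    have eqU : ∑ i, Real.exp (α i + β j) * (Real.exp K * (r i * c j * S)) =
        c j * (Real.exp K * (S * (Real.exp (β j) * ∑ i, Real.exp (α i) * r i))) := by
      calc ∑ i, Real.exp (α i + β j) * (Real.exp K * (r i * c j * S))
          = ∑ i, (Real.exp K * (c j * S * Real.exp (β j))) * (Real.exp (α i) * r i) :=
            Finset.sum_congr rfl fun i _ => by rw [Real.exp_add]; ring
        _ = (Real.exp K * (c j * S * Real.exp (β j))) * ∑ i, Real.exp (α i) * r i := by
            rw [← Finset.mul_sum]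
        _ = _ := by ring
    have eqM : ∑ i, Real.exp (α i + β j) * (N ^ 2 * Λ i j) = c j * N ^ 2 := by
      calc ∑ i, Real.exp (α i + β j) * (N ^ 2 * Λ i j)
          = N ^ 2 * ∑ i, Real.exp (α i + β j) * Λ i j := by
            rw [Finset.mul_sum]; exact Finset.sum_congr rfl fun i _ => by ring
        _ = c j * N ^ 2 := by rw [hcolEq j, mul_comm]
    constructor
    · have h := Finset.sum_le_sum
        (fun i (_ : i ∈ Finset.univ) => mul_le_mul_of_nonneg_left (hub i j)
          (Real.exp_pos (α i + β j)).le)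
      rw [eqM, eqU] at h
      exact flipB _ _ (le_of_mul_le_mul_left h (hc j))
    · have h := Finset.sum_le_sum
        (fun i (_ : i ∈ Finset.univ) => mul_le_mul_of_nonneg_left (hlb i j)
          (Real.exp_pos (α i + β j)).le)
      rw [eqM, eqL] at h
      exact flipA _ _ (le_of_mul_le_mul_left h (hc j))
  -- total mass of the coupling
  have hPtot : ∑ i, ∑ j, Real.exp (α i + β j) * Λ i j = N := by
    calc ∑ i, ∑ j, Real.exp (α i + β j) * Λ i j = ∑ i, r i :=
          Finset.sum_congr rfl fun i _ => hrowEq i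
      _ = N := hrN
  -- AB upper bound : e^{-K} * (S * (A*B)) ≤ N * N²
  have hABub : Real.exp (-K) * (S * ((∑ i, Real.exp (α i) * r i) * ∑ j, Real.exp (β j) * c j))
      ≤ N * N ^ 2 := by
    have h := Finset.sum_le_sum (fun i (_ : i ∈ Finset.univ) => Finset.sum_le_sum
      (fun j (_ : j ∈ Finset.univ) => mul_le_mul_of_nonneg_left (hlb i j)
        (Real.exp_pos (α i + β j)).le))
    have eqL : ∑ i, ∑ j, Real.exp (α i + β j) * (Real.exp (-K) * (r i * c j * S)) =
        Real.exp (-K) * (S * ((∑ i, Real.exp (α i) * r i) * ∑ j, Real.exp (β j) * c j)) := by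
      calc ∑ i, ∑ j, Real.exp (α i + β j) * (Real.exp (-K) * (r i * c j * S))
          = ∑ i, (Real.exp (-K) * S * (Real.exp (α i) * r i)) * ∑ j, Real.exp (β j) * c j := by
            refine Finset.sum_congr rfl fun i _ => ?_
            rw [Finset.mul_sum]
            exact Finset.sum_congr rfl fun j _ => by rw [Real.exp_add]; ring
        _ = (Real.exp (-K) * S) * ((∑ i, Real.exp (α i) * r i) * ∑ j, Real.exp (β j) * c j) := by
            rw [← Finset.sum_mul, ← Finset.mul_sum]; ring
        _ = _ := by ring
    have eqR : ∑ i, ∑ j, Real.exp (α i + β j) * (N ^ 2 * Λ i j) = N * N ^ 2 := by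
      calc ∑ i, ∑ j, Real.exp (α i + β j) * (N ^ 2 * Λ i j)
          = ∑ i, N ^ 2 * ∑ j, Real.exp (α i + β j) * Λ i j := by
            refine Finset.sum_congr rfl fun i _ => ?_
            rw [Finset.mul_sum]
            exact Finset.sum_congr rfl fun j _ => by ring
        _ = N ^ 2 * ∑ i, ∑ j, Real.exp (α i + β j) * Λ i j := by rw [← Finset.mul_sum]
        _ = N * N ^ 2 := by rw [hPtot, mul_comm]
    rw [eqL, eqR] at h
    exact h
  -- Gibbs inequality : N log(N/S) ≤ ∑ α r + ∑ β c
  have hGibbs : N * Real.log (N / S) ≤ (∑ i, α i * r i) + ∑ j, β j * c j := by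
    have hpt : ∀ i j, Real.exp (α i + β j) * Λ i j * Real.log (N / S) +
        Real.exp (α i + β j) * Λ i j - Λ i j * (N / S) ≤
        Real.exp (α i + β j) * Λ i j * (α i + β j) := by
      intro i j
      have ht := Real.add_one_le_exp (-(α i + β j) + Real.log (N / S))
      have hP0 : (0:ℝ) ≤ Real.exp (α i + β j) * Λ i j :=
        (mul_pos (Real.exp_pos _) (hΛ i j)).le
      have h2 := mul_le_mul_of_nonneg_left ht hP0
      have hE : Real.exp (α i + β j) * Λ i j * Real.exp (-(α i + β j) + Real.log (N / S)) =
          Λ i j * (N / S) := by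
        rw [show Real.exp (α i + β j) * Λ i j * Real.exp (-(α i + β j) + Real.log (N / S)) =
            (Real.exp (α i + β j) * Real.exp (-(α i + β j) + Real.log (N / S))) * Λ i j from
            by ring, ← Real.exp_add]
        rw [show α i + β j + (-(α i + β j) + Real.log (N / S)) = Real.log (N / S) from by ring]
        rw [Real.exp_log (by positivity)]
        ring
      nlinarith [h2, hE]
    have h := Finset.sum_le_sum (fun i (_ : i ∈ Finset.univ) => Finset.sum_le_sum
      (fun j (_ : j ∈ Finset.univ) => hpt i j))
    -- left side
    have eqL : ∑ i, ∑ j, (Real.exp (α i + β j) * Λ i j * Real.log (N / S) +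
        Real.exp (α i + β j) * Λ i j - Λ i j * (N / S)) =
        N * Real.log (N / S) + N - N := by
      have e1 : ∑ i, ∑ j, Real.exp (α i + β j) * Λ i j * Real.log (N / S) =
          N * Real.log (N / S) := by
        simp only [← Finset.sum_mul]
        rw [hPtot]
      have e3 : ∑ i, ∑ j, Λ i j * (N / S) = N := by
        simp only [← Finset.sum_mul]
        rw [← hS]
        field_simp
      calc ∑ i, ∑ j, (Real.exp (α i + β j) * Λ i j * Real.log (N / S) +
            Real.exp (α i + β j) * Λ i j - Λ i j * (N / S))
          = ∑ i, ((∑ j, (Real.exp (α i + β j) * Λ i j * Real.log (N / S) +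
              Real.exp (α i + β j) * Λ i j)) - ∑ j, Λ i j * (N / S)) :=
            Finset.sum_congr rfl fun i _ => Finset.sum_sub_distrib _ _
        _ = ∑ i, ((∑ j, Real.exp (α i + β j) * Λ i j * Real.log (N / S)) +
              (∑ j, Real.exp (α i + β j) * Λ i j) - ∑ j, Λ i j * (N / S)) := by
            refine Finset.sum_congr rfl fun i _ => ?_
            rw [Finset.sum_add_distrib]
        _ = (∑ i, ∑ j, Real.exp (α i + β j) * Λ i j * Real.log (N / S)) +
              (∑ i, ∑ j, Real.exp (α i + β j) * Λ i j) - ∑ i, ∑ j, Λ i j * (N / S) := by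
            rw [Finset.sum_sub_distrib, Finset.sum_add_distrib]
        _ = N * Real.log (N / S) + N - N := by rw [e1, hPtot, e3]
    -- right side
    have eqR : ∑ i, ∑ j, Real.exp (α i + β j) * Λ i j * (α i + β j) =
        (∑ i, α i * r i) + ∑ j, β j * c j := by
      calc ∑ i, ∑ j, Real.exp (α i + β j) * Λ i j * (α i + β j)
          = ∑ i, (α i * r i + ∑ j, Real.exp (α i + β j) * Λ i j * β j) := by
            refine Finset.sum_congr rfl fun i _ => ?_
            calc ∑ j, Real.exp (α i + β j) * Λ i j * (α i + β j)
                = ∑ j, (α i * (Real.exp (α i + β j) * Λ i j) +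
                    Real.exp (α i + β j) * Λ i j * β j) :=
                  Finset.sum_congr rfl fun j _ => by ring
              _ = α i * (∑ j, Real.exp (α i + β j) * Λ i j) +
                    ∑ j, Real.exp (α i + β j) * Λ i j * β j := by
                  rw [Finset.sum_add_distrib, Finset.mul_sum]
              _ = α i * r i + ∑ j, Real.exp (α i + β j) * Λ i j * β j := by rw [hrowEq i]
        _ = (∑ i, α i * r i) + ∑ i, ∑ j, Real.exp (α i + β j) * Λ i j * β j :=
            Finset.sum_add_distrib
        _ = (∑ i, α i * r i) + ∑ j, ∑ i, Real.exp (α i + β j) * Λ i j * β j := by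
            rw [Finset.sum_comm]
        _ = (∑ i, α i * r i) + ∑ j, β j * c j := by
            congr 1
            refine Finset.sum_congr rfl fun j _ => ?_
            rw [← Finset.sum_mul, hcolEq j, mul_comm]
    rw [eqL, eqR] at h
    linarith
  -- Jensen : N * exp(a) ≤ A with a = (∑ α r)/N, similarly for B
  have hJen : ∀ (k : ℕ) (x : Fin k → ℝ) (w : Fin k → ℝ), (∀ i, 0 < w i) → (∑ i, w i = N) →
      N * Real.exp ((∑ i, x i * w i) / N) ≤ ∑ i, Real.exp (x i) * w i := by
    intro k x w hw hwN
    set a := (∑ i, x i * w i) / N with ha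
    have haN : a * N = ∑ i, x i * w i := div_mul_cancel₀ _ hN.ne'
    have hpt2 : ∀ i, Real.exp a * (w i * (x i - a)) + Real.exp a * w i ≤
        Real.exp (x i) * w i := by
      intro i
      have ht := Real.add_one_le_exp (x i - a)
      have h2 := mul_le_mul_of_nonneg_left ht (mul_pos (Real.exp_pos a) (hw i)).le
      have hE : Real.exp a * w i * Real.exp (x i - a) = Real.exp (x i) * w i := by
        rw [show Real.exp a * w i * Real.exp (x i - a) =
            (Real.exp a * Real.exp (x i - a)) * w i from by ring, ← Real.exp_add]
        rw [show a + (x i - a) = x i from by ring]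
      nlinarith [h2, hE]
    have hs := Finset.sum_le_sum (fun i (_ : i ∈ Finset.univ) => hpt2 i)
    have l1 : ∑ i, (Real.exp a * (w i * (x i - a)) + Real.exp a * w i) =
        Real.exp a * ((∑ i, x i * w i) - a * N) + Real.exp a * N := by
      rw [Finset.sum_add_distrib, ← Finset.mul_sum, ← Finset.mul_sum, hwN]
      congr 2
      calc ∑ i, w i * (x i - a) = ∑ i, (x i * w i - a * w i) :=
            Finset.sum_congr rfl fun i _ => by ring
        _ = (∑ i, x i * w i) - ∑ i, a * w i := Finset.sum_sub_distrib _ _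
        _ = (∑ i, x i * w i) - a * ∑ i, w i := by rw [Finset.mul_sum]
        _ = (∑ i, x i * w i) - a * N := by rw [hwN]
    rw [l1] at hs
    have : (∑ i, x i * w i) - a * N = 0 := by rw [haN]; ring
    rw [this] at hs
    calc N * Real.exp a = Real.exp a * 0 + Real.exp a * N := by ring
      _ ≤ _ := hs
  have hAJ := hJen m α r hr hrN
  have hBJ := hJen n β c hc hcN
  -- AB lower bound : N³ ≤ S * (A * B)
  have hABlb : N ^ 3 ≤ S * ((∑ i, Real.exp (α i) * r i) * ∑ j, Real.exp (β j) * c j) := by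
    have habT : Real.log (N / S) ≤ (∑ i, α i * r i) / N + (∑ j, β j * c j) / N := by
      rw [← add_div, le_div_iff₀ hN]
      nlinarith [hGibbs]
    have hEab : N / S ≤ Real.exp ((∑ i, α i * r i) / N) * Real.exp ((∑ j, β j * c j) / N) := by
      rw [← Real.exp_add]
      calc N / S = Real.exp (Real.log (N / S)) := (Real.exp_log (by positivity)).symm
        _ ≤ _ := Real.exp_le_exp.mpr habT
    have m1 : (N * Real.exp ((∑ i, α i * r i) / N)) * (N * Real.exp ((∑ j, β j * c j) / N)) ≤
        (∑ i, Real.exp (α i) * r i) * ∑ j, Real.exp (β j) * c j :=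
      mul_le_mul hAJ hBJ (by positivity) hA0.le
    have m2 : N ^ 2 * (N / S) ≤
        (N * Real.exp ((∑ i, α i * r i) / N)) * (N * Real.exp ((∑ j, β j * c j) / N)) := by
      calc N ^ 2 * (N / S) ≤ N ^ 2 * (Real.exp ((∑ i, α i * r i) / N) *
            Real.exp ((∑ j, β j * c j) / N)) := mul_le_mul_of_nonneg_left hEab (by positivity)
        _ = _ := by ring
    have h3 : N ^ 3 / S ≤ (∑ i, Real.exp (α i) * r i) * ∑ j, Real.exp (β j) * c j := by
      calc N ^ 3 / S = N ^ 2 * (N / S) := by ring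
        _ ≤ _ := m2.trans m1
    have h4 := (div_le_iff₀ hS0).mp h3
    linarith [h4]
  -- final assembly
  intro i j
  obtain ⟨hXlb, hXub⟩ := hrowB i
  obtain ⟨hYlb, hYub⟩ := hcolB j
  constructor
  · -- lower bound
    have p1 : (Real.exp (-K) * N ^ 2) * (Real.exp (-K) * N ^ 2) ≤
        (S * (Real.exp (α i) * ∑ j, Real.exp (β j) * c j)) *
        (S * (Real.exp (β j) * ∑ i, Real.exp (α i) * r i)) :=
      mul_le_mul hXlb hYlb (by positivity)
        (mul_nonneg hS0.le (mul_nonneg (Real.exp_pos _).le hB0.le))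
    have p2 : (S * (Real.exp (α i) * ∑ j, Real.exp (β j) * c j)) *
        (S * (Real.exp (β j) * ∑ i, Real.exp (α i) * r i)) =
        Real.exp (α i + β j) * S *
          (S * ((∑ i, Real.exp (α i) * r i) * ∑ j, Real.exp (β j) * c j)) := by
      rw [Real.exp_add]; ring
    have p3 : S * ((∑ i, Real.exp (α i) * r i) * ∑ j, Real.exp (β j) * c j) ≤
        Real.exp K * (N * N ^ 2) := flipA _ _ hABub
    have p4 : Real.exp (α i + β j) * S *
        (S * ((∑ i, Real.exp (α i) * r i) * ∑ j, Real.exp (β j) * c j)) ≤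
        Real.exp (α i + β j) * S * (Real.exp K * (N * N ^ 2)) :=
      mul_le_mul_of_nonneg_left p3 (by positivity)
    have p5 : (Real.exp (-K) * N ^ 2) * (Real.exp (-K) * N ^ 2) ≤
        Real.exp (α i + β j) * S * (Real.exp K * (N * N ^ 2)) := by
      calc (Real.exp (-K) * N ^ 2) * (Real.exp (-K) * N ^ 2) ≤ _ := p1
        _ = _ := p2
        _ ≤ _ := p4
    have p6 := mul_le_mul_of_nonneg_left p5 (Real.exp_pos (-K)).le
    have e1 : Real.exp (-K) * ((Real.exp (-K) * N ^ 2) * (Real.exp (-K) * N ^ 2)) =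
        Real.exp (-(3 * K)) * N * N ^ 3 := by
      rw [show Real.exp (-K) * ((Real.exp (-K) * N ^ 2) * (Real.exp (-K) * N ^ 2)) =
          (Real.exp (-K) * Real.exp (-K) * Real.exp (-K)) * (N * N ^ 3) from by ring]
      rw [← Real.exp_add, ← Real.exp_add]
      rw [show -K + -K + -K = -(3 * K) from by ring]
      ring
    have e2 : Real.exp (-K) * (Real.exp (α i + β j) * S * (Real.exp K * (N * N ^ 2))) =
        Real.exp (α i + β j) * S * N ^ 3 := by
      rw [show Real.exp (-K) * (Real.exp (α i + β j) * S * (Real.exp K * (N * N ^ 2))) =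
          (Real.exp (-K) * Real.exp K) * (Real.exp (α i + β j) * S * (N * N ^ 2)) from by ring]
      rw [hKK]
      ring
    rw [e1, e2] at p6
    have h8 : Real.exp (-(4 * K)) ≤ Real.exp (-(3 * K)) :=
      Real.exp_le_exp.mpr (by linarith)
    have p7 : Real.exp (-(4 * K)) * N * N ^ 3 ≤ Real.exp (α i + β j) * S * N ^ 3 := by
      calc Real.exp (-(4 * K)) * N * N ^ 3 ≤ Real.exp (-(3 * K)) * N * N ^ 3 := by
            have := mul_le_mul_of_nonneg_right h8 (show (0:ℝ) ≤ N * N ^ 3 by positivity)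
            nlinarith [this]
        _ ≤ _ := p6
    rw [div_le_iff₀ hS0]
    exact le_of_mul_le_mul_right p7 (by positivity)
  · -- upper bound
    have h3 : (S * (Real.exp (α i) * ∑ j, Real.exp (β j) * c j)) *
        (S * (Real.exp (β j) * ∑ i, Real.exp (α i) * r i)) ≤
        (Real.exp K * N ^ 2) * (Real.exp K * N ^ 2) :=
      mul_le_mul hXub hYub
        (mul_nonneg hS0.le (mul_nonneg (Real.exp_pos _).le hA0.le)) (by positivity)
    have h5 : Real.exp (α i + β j) * S * N ^ 3 ≤
        Real.exp (α i + β j) * S *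
          (S * ((∑ i, Real.exp (α i) * r i) * ∑ j, Real.exp (β j) * c j)) :=
      mul_le_mul_of_nonneg_left hABlb (by positivity)
    have h6 : Real.exp (α i + β j) * S *
        (S * ((∑ i, Real.exp (α i) * r i) * ∑ j, Real.exp (β j) * c j)) =
        (S * (Real.exp (α i) * ∑ j, Real.exp (β j) * c j)) *
        (S * (Real.exp (β j) * ∑ i, Real.exp (α i) * r i)) := by
      rw [Real.exp_add]; ring
    have h7 : (Real.exp K * N ^ 2) * (Real.exp K * N ^ 2) = Real.exp (2 * K) * N * N ^ 3 := by
      rw [show (2:ℝ) * K = K + K from by ring, Real.exp_add]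
      ring
    have h4 : Real.exp (α i + β j) * S * N ^ 3 ≤ Real.exp (2 * K) * N * N ^ 3 := by
      calc Real.exp (α i + β j) * S * N ^ 3 ≤ _ := h5
        _ = _ := h6
        _ ≤ _ := h3
        _ = _ := h7
    rw [le_div_iff₀ hS0]
    exact le_of_mul_le_mul_right h4 (by positivity)
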